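/- A bijective ranking ρ : {1,…,p} → {1,…,p} is compatible with the intervals I_1,…,I_p if and only if the linear order ≤_ρ defined by j₁ ≤_ρ j₂ iff ρ(j₁) ≤ ρ(j₂) is a linear extension of ≼_I. -/

import Mathlib

noncomputable def seqZ (p : ℕ) (L M : Fin p → ℝ) : ℕ → ℝ
  | 0 => if h : 0 < p then L ⟨0, h⟩ else 0
  | (k+1) => if h : k + 1 < p then
      max (L ⟨k+1, h⟩) ((seqZ p L M k + M ⟨k+1, h⟩)/2) else 0

lemma seqZ_spec (p : ℕ) (L M : Fin p → ℝ)
    (hLM : ∀ j : Fin p, L j < M j)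
    (hM : ∀ (k : ℕ) (h : k + 1 < p), M ⟨k, Nat.lt_of_succ_lt h⟩ ≤ M ⟨k+1, h⟩) :
    ∀ (k : ℕ) (h : k < p),
      L ⟨k, h⟩ ≤ seqZ p L M k ∧ seqZ p L M k < M ⟨k, h⟩ := by
  intro k
  induction k with
  | zero =>
    intro h
    simp only [seqZ, dif_pos h]
    exact ⟨le_refl _, hLM _⟩
  | succ k ih =>
    intro h
    have hk : k < p := Nat.lt_of_succ_lt h
    obtain ⟨h1, h2⟩ := ih hk
    constructor
    · simp only [seqZ, dif_pos h]
      exact le_max_left _ _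
    · simp only [seqZ, dif_pos h]
      refine max_lt (hLM _) ?_
      have := hM k h
      linarith
lemma seqZ_strict (p : ℕ) (L M : Fin p → ℝ)
    (hLM : ∀ j : Fin p, L j < M j)
    (hM : ∀ (k : ℕ) (h : k + 1 < p), M ⟨k, Nat.lt_of_succ_lt h⟩ ≤ M ⟨k+1, h⟩) :
    ∀ (k₁ k₂ : ℕ), k₁ < k₂ → k₂ < p → seqZ p L M k₁ < seqZ p L M k₂ := by
  intro k₁ k₂ h12 h2
  induction k₂ with
  | zero => omega
  | succ k ih =>
    have hk : k < p := Nat.lt_of_succ_lt h2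
    have hstep : seqZ p L M k < seqZ p L M (k+1) := by
      have h2' := (seqZ_spec p L M hLM hM k hk).2
      have := hM k h2
      show seqZ p L M k < seqZ p L M (k+1)
      simp only [seqZ, dif_pos h2]
      have : seqZ p L M k < (seqZ p L M k + M ⟨k+1, h2⟩)/2 := by linarith
      exact lt_max_of_lt_right this
    rcases Nat.lt_succ_iff_lt_or_eq.mp h12 with h | h
    · exact lt_trans (ih h hk) hstep
    · subst h; exact hstep

theorem ranking_compatible_iff_linear_extension (p : ℕ) (hp : 1 ≤ p)
    (ℓ r : Fin p → ℝ) (hlr : ∀ j, ℓ j < r j)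
    (hdist : Function.Injective (Sum.elim ℓ r : Fin p ⊕ Fin p → ℝ))
    (ρ : Fin p → Fin p) (hρ : Function.Bijective ρ) :
    (∃ x : Fin p → ℝ, Function.Injective x ∧ (∀ j, x j ∈ Set.Icc (ℓ j) (r j)) ∧
        ∀ j : Fin p, (ρ j : ℕ) + 1 = {i : Fin p | x i ≤ x j}.ncard) ↔
      (∀ j₁ j₂ : Fin p, (r j₁ < ℓ j₂ ∨ j₁ = j₂) → ρ j₁ ≤ ρ j₂) := by
  constructor
  · rintro ⟨x, hinj, hmem, hrank⟩ j₁ j₂ hcase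
    rcases hcase with hlt | heq
    · have hx : x j₁ ≤ x j₂ :=
        le_trans (hmem j₁).2 (le_trans hlt.le (hmem j₂).1)
      have hsub : {i : Fin p | x i ≤ x j₁} ⊆ {i : Fin p | x i ≤ x j₂} := by
        intro i hi; exact le_trans hi hx
      have hcard : {i : Fin p | x i ≤ x j₁}.ncard ≤ {i : Fin p | x i ≤ x j₂}.ncard :=
        Set.ncard_le_ncard hsub (Set.toFinite _)
      have := hrank j₁ ▸ hrank j₂ ▸ hcard
      have h : (ρ j₁ : ℕ) + 1 ≤ (ρ j₂ : ℕ) + 1 := by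
        rw [hrank j₁, hrank j₂]; exact hcard
      exact Fin.le_def.mpr (by omega)
    · subst heq; exact le_refl _
  · intro hext
    set e := Equiv.ofBijective ρ hρ with he
    set σ : Fin p → Fin p := ⇑e.symm with hσ
    have hρσ : ∀ k, ρ (σ k) = k := fun k => e.apply_symm_apply k
    have hσρ : ∀ j, σ (ρ j) = j := fun j => e.symm_apply_apply j
    set L : Fin p → ℝ := fun k => ℓ (σ k) with hL
    set M : Fin p → ℝ := fun k =>
      (Finset.univ.filter (fun m => k ≤ m)).inf'
        ⟨k, by simp⟩ (fun m => r (σ m)) with hMdef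
    -- key: L k < r (σ m) for all m ≥ k
    have hkey : ∀ k m : Fin p, k ≤ m → L k < r (σ m) := by
      intro k m hkm
      by_contra hc
      push_neg at hc
      rcases lt_or_eq_of_le hc with hlt | heq
      · have := hext (σ m) (σ k) (Or.inl hlt)
        rw [hρσ, hρσ] at this
        have : m = k := le_antisymm this hkm
        subst this
        exact absurd hlt (not_lt.mpr (hlr (σ m)).le)
      · have : (Sum.elim ℓ r : Fin p ⊕ Fin p → ℝ) (Sum.inr (σ m)) =
            (Sum.elim ℓ r : Fin p ⊕ Fin p → ℝ) (Sum.inl (σ k)) := by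
          simpa [hL] using heq
        have := hdist this
        simp at this
    have hLM : ∀ k, L k < M k := by
      intro k
      rw [hMdef]
      refine (Finset.lt_inf'_iff _).2 ?_
      intro m hm
      exact hkey k m (Finset.mem_filter.mp hm).2
    have hMr : ∀ k, M k ≤ r (σ k) := by
      intro k
      exact Finset.inf'_le _ (by simp)
    have hMmono : ∀ (k : ℕ) (h : k + 1 < p),
        M ⟨k, Nat.lt_of_succ_lt h⟩ ≤ M ⟨k+1, h⟩ := by
      intro k h
      rw [hMdef]; refine (Finset.le_inf'_iff _ _).2 ?_
      intro m hm
      refine Finset.inf'_le _ ?_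
      simp only [Finset.mem_filter, Finset.mem_univ, true_and] at hm ⊢
      exact le_trans (by simp [Fin.le_def]) hm
    set z := seqZ p L M with hz
    have hspec := seqZ_spec p L M hLM hMmono
    have hstrict := seqZ_strict p L M hLM hMmono
    refine ⟨fun j => z (ρ j : ℕ), ?_, ?_, ?_⟩
    · intro i j hij
      by_contra hne
      have hρne : (ρ i : ℕ) ≠ (ρ j : ℕ) := by
        intro h
        exact hne (hρ.injective (Fin.ext h))
      rcases lt_or_gt_of_ne hρne with h | h
      · exact absurd hij (ne_of_lt (hstrict _ _ h (ρ j).isLt))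
      · exact absurd hij.symm (ne_of_lt (hstrict _ _ h (ρ i).isLt))
    · intro j
      obtain ⟨h1, h2⟩ := hspec (ρ j : ℕ) (ρ j).isLt
      have hfin : (⟨(ρ j : ℕ), (ρ j).isLt⟩ : Fin p) = ρ j := Fin.eta _ _
      rw [hfin] at h1 h2
      constructor
      · have : L (ρ j) = ℓ j := by rw [hL]; simp [hσρ]
        rw [← this]; exact h1
      · have : M (ρ j) ≤ r j := by
          have := hMr (ρ j); rwa [hσρ] at this
        exact le_of_lt (lt_of_lt_of_le h2 this)
    · intro j
      have hset : {i : Fin p | z (ρ i : ℕ) ≤ z (ρ j : ℕ)} = {i : Fin p | ρ i ≤ ρ j} := by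
        ext i
        simp only [Set.mem_setOf_eq]
        constructor
        · intro h
          by_contra hc
          push_neg at hc
          have : (ρ j : ℕ) < (ρ i : ℕ) := hc
          exact absurd h (not_le.mpr (hstrict _ _ this (ρ i).isLt))
        · intro h
          rcases lt_or_eq_of_le h with h | h
          · exact le_of_lt (hstrict _ _ h (ρ j).isLt)
          · rw [h]
      rw [hset]
      have : {i : Fin p | ρ i ≤ ρ j} = (σ '' {k : Fin p | k ≤ ρ j}) := by
        ext i
        simp only [Set.mem_setOf_eq, Set.mem_image]
        constructor
        · intro h
          exact ⟨ρ i, h, hσρ i⟩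
        · rintro ⟨k, hk, rfl⟩
          rwa [hρσ]
      rw [this, Set.ncard_image_of_injective _ e.symm.injective]
      have : {k : Fin p | k ≤ ρ j} = (Finset.Iic (ρ j) : Finset (Fin p)) := by
        ext k; simp
      rw [this, Set.ncard_coe_finset, Fin.card_Iic]
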